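/- Let H and G be groups, let α : H → G be a surjective group homomorphism, and let H act on a set S. Let H₀ ≤ H₁ ≤ H be subgroups such that α(H₁) = G, let C ≤ H be a subgroup with ker α ≤ C, and let x ∈ S. If the orbit of x under H₀ ∩ C equals the orbit of x under C, then the orbit of x under H₁ equals the orbit of x under H. -/
import Mathlib


/-- Let `H` and `G` be groups, `α : H → G` a surjective group homomorphism,
and let `H` act on a set `S`. Let `H₀ ≤ H₁ ≤ H` be subgroups with `α(H₁) = G`, let
`C ≤ H` be a subgroup with `ker α ≤ C`, and let `x ∈ S`. If the orbit of `x` under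
`H₀ ∩ C` equals the orbit of `x` under `C`, then the orbit of `x` under `H₁` equals the
orbit of `x` under `H`. -/
theorem orbit_eq_of_inf_orbit_eq {H G S : Type*} [Group H] [Group G] [MulAction H S]
    (α : H →* G) (hα : Function.Surjective α)
    (H₀ H₁ C : Subgroup H) (h01 : H₀ ≤ H₁)
    (hH1 : Subgroup.map α H₁ = ⊤)
    (hker : α.ker ≤ C) (x : S)
    (horb : (fun h : H => h • x) '' ↑(H₀ ⊓ C) = (fun h : H => h • x) '' ↑C) :
    (fun h : H => h • x) '' ↑H₁ = Set.range fun h : H => h • x := by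
  apply Set.eq_of_subset_of_subset
  · rintro _ ⟨h, _, rfl⟩; exact ⟨h, rfl⟩
  · rintro _ ⟨h, rfl⟩
    -- find h₁ ∈ H₁ with α h₁ = α h
    have : α h ∈ Subgroup.map α H₁ := by rw [hH1]; trivial
    obtain ⟨h₁, hh₁, heq⟩ := this
    have hc : h₁⁻¹ * h ∈ C := hker (by simp [MonoidHom.mem_ker, heq])
    have : (fun h : H => h • x) ((h₁⁻¹ * h)) ∈ (fun h : H => h • x) '' ↑C :=
      ⟨_, hc, rfl⟩
    rw [← horb] at this
    obtain ⟨d, hd, hdx⟩ := this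
    refine ⟨h₁ * d, H₁.mul_mem hh₁ (h01 hd.1), ?_⟩
    simp only at hdx ⊢
    rw [mul_smul, hdx, mul_smul, smul_smul, mul_inv_cancel, one_smul]
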